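/- Let f, g : [a,b] → ℝ be continuous with f(x) ≤ g(x) for all x ∈ [a,b]. Then Tf(x) ≤ Tg(x) for all x ∈ [a,b], where T is the operator assigning to a continuous function the derivative of the convex envelope of its primitive. -/

import Mathlib

open Set MeasureTheory Filter Topology

/-- The convex envelope (convexification) of `f` on `[a,b]`. -/
noncomputable def convEnv (a b : ℝ) (f : ℝ → ℝ) : ℝ → ℝ := fun x =>
  sInf {y : ℝ | ∃ lam x₀ x₁ : ℝ, lam ∈ Set.Icc (0:ℝ) 1 ∧ x₀ ∈ Set.Icc a b ∧
    x₁ ∈ Set.Icc a b ∧ (1 - lam) * x₀ + lam * x₁ = x ∧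
    y = (1 - lam) * f x₀ + lam * f x₁}

/-- The primitive `F(x) = ∫_a^x f(y) dy`. -/
noncomputable def primit (a : ℝ) (f : ℝ → ℝ) : ℝ → ℝ := fun x => ∫ y in a..x, f y

/-- The operator `T`: `Tf = (F**)'`, the derivative of the convex envelope of the
primitive `F` of `f`. -/
noncomputable def Tcv (a b : ℝ) (f : ℝ → ℝ) : ℝ → ℝ :=
  derivWithin (convEnv a b (primit a f)) (Set.Icc a b)

namespace TcvAux

/-- The defining set of the convex envelope. -/
def eSet (a b : ℝ) (F : ℝ → ℝ) (x : ℝ) : Set ℝ :=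
  {y : ℝ | ∃ lam x₀ x₁ : ℝ, lam ∈ Set.Icc (0:ℝ) 1 ∧ x₀ ∈ Set.Icc a b ∧
    x₁ ∈ Set.Icc a b ∧ (1 - lam) * x₀ + lam * x₁ = x ∧
    y = (1 - lam) * F x₀ + lam * F x₁}

lemma convEnv_def (a b : ℝ) (F : ℝ → ℝ) (x : ℝ) :
    convEnv a b F x = sInf (eSet a b F x) := rfl

variable {a b M : ℝ} {F f : ℝ → ℝ}

lemma self_mem_eSet {x : ℝ} (hx : x ∈ Icc a b) : F x ∈ eSet a b F x :=
  ⟨0, x, x, by norm_num, hx, hx, by ring, by ring⟩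

lemma chord_mem_eSet {s t x : ℝ} (hs : s ∈ Icc a b) (ht : t ∈ Icc a b)
    (hsx : s ≤ x) (hxt : x ≤ t) (hst : s < t) :
    F s + (F t - F s) / (t - s) * (x - s) ∈ eSet a b F x := by
  have h0 : (0:ℝ) < t - s := sub_pos.2 hst
  refine ⟨(x - s) / (t - s), s, t,
    ⟨div_nonneg (by linarith) h0.le, by rw [div_le_one h0]; linarith⟩, hs, ht, ?_, ?_⟩
  · field_simp
    ring
  · field_simp
    ring

lemma affine_le_on_eSet {c p x : ℝ} (h : ∀ u ∈ Icc a b, c + p * u ≤ F u)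
    {y : ℝ} (hy : y ∈ eSet a b F x) : c + p * x ≤ y := by
  obtain ⟨lam, x₀, x₁, hlam, h0, h1, hxc, rfl⟩ := hy
  have e0 := h x₀ h0
  have e1 := h x₁ h1
  calc c + p * x = (1 - lam) * (c + p * x₀) + lam * (c + p * x₁) := by
        rw [← hxc]; ring
    _ ≤ (1 - lam) * F x₀ + lam * F x₁ :=
        add_le_add (mul_le_mul_of_nonneg_left e0 (by linarith [hlam.2]))
          (mul_le_mul_of_nonneg_left e1 hlam.1)

/-! ### The primitive -/

lemma primit_intervalIntegrable (hf : ContinuousOn f (Icc a b)) {u v : ℝ}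
    (hu : u ∈ Icc a b) (hv : v ∈ Icc a b) : IntervalIntegrable f volume u v :=
  (hf.mono (uIcc_subset_Icc hu hv)).intervalIntegrable

lemma primit_sub (hab : a ≤ b) (hf : ContinuousOn f (Icc a b)) {u v : ℝ}
    (hu : u ∈ Icc a b) (hv : v ∈ Icc a b) :
    primit a f v - primit a f u = ∫ y in u..v, f y := by
  have ha : a ∈ Icc a b := ⟨le_refl a, hab⟩
  unfold primit
  rw [intervalIntegral.integral_interval_sub_left
    (primit_intervalIntegrable hf ha hv) (primit_intervalIntegrable hf ha hu)]

lemma primit_diff_le (hab : a ≤ b) (hf : ContinuousOn f (Icc a b))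
    (hM : ∀ u ∈ Icc a b, |f u| ≤ M) {u v : ℝ}
    (hu : u ∈ Icc a b) (hv : v ∈ Icc a b) (huv : u ≤ v) :
    |primit a f v - primit a f u| ≤ M * (v - u) := by
  rw [primit_sub hab hf hu hv]
  have h := intervalIntegral.norm_integral_le_of_norm_le_const (C := M)
      (a := u) (b := v) (f := f) ?_
  · rw [Real.norm_eq_abs] at h
    rwa [abs_of_nonneg (sub_nonneg.2 huv)] at h
  · intro x hx
    rw [uIoc_of_le huv] at hx
    exact hM x ⟨le_trans hu.1 hx.1.le, le_trans hx.2 hv.2⟩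

lemma primit_hasDeriv (hab : a ≤ b) (hf : ContinuousOn f (Icc a b)) {x : ℝ}
    (hx : x ∈ Icc a b) : HasDerivWithinAt (primit a f) (f x) (Icc a b) x := by
  haveI : Fact (x ∈ Icc a b) := ⟨hx⟩
  exact intervalIntegral.integral_hasDerivWithinAt_right
    (primit_intervalIntegrable hf ⟨le_rfl, hab⟩ hx)
    (hf.stronglyMeasurableAtFilter_nhdsWithin measurableSet_Icc x)
    (hf x hx)

lemma primit_cont (hab : a ≤ b) (hf : ContinuousOn f (Icc a b)) :
    ContinuousOn (primit a f) (Icc a b) :=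
  fun x hx => (primit_hasDeriv hab hf hx).continuousWithinAt

/-! ### The envelope of the primitive -/

/-- Abbreviation for the convex envelope of the primitive. -/
noncomputable def Ee (a b : ℝ) (f : ℝ → ℝ) : ℝ → ℝ := convEnv a b (primit a f)

lemma Tcv_eq (a b : ℝ) (f : ℝ → ℝ) :
    Tcv a b f = derivWithin (Ee a b f) (Icc a b) := rfl

lemma minorant1 (hab : a ≤ b) (hf : ContinuousOn f (Icc a b))
    (hM : ∀ u ∈ Icc a b, |f u| ≤ M) :
    ∀ u ∈ Icc a b, (primit a f a + M * a) + (-M) * u ≤ primit a f u := by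
  intro u hu
  have h := abs_le.1 (primit_diff_le hab hf hM ⟨le_rfl, hab⟩ hu hu.1)
  linarith [h.1]

lemma minorant2 (hab : a ≤ b) (hf : ContinuousOn f (Icc a b))
    (hM : ∀ u ∈ Icc a b, |f u| ≤ M) :
    ∀ u ∈ Icc a b, (primit a f b - M * b) + M * u ≤ primit a f u := by
  intro u hu
  have h := abs_le.1 (primit_diff_le hab hf hM hu ⟨hab, le_rfl⟩ hu.2)
  linarith [h.2]

lemma bddBelow_eSet (hab : a ≤ b) (hf : ContinuousOn f (Icc a b))
    (hM : ∀ u ∈ Icc a b, |f u| ≤ M) (x : ℝ) :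
    BddBelow (eSet a b (primit a f) x) :=
  ⟨(primit a f a + M * a) + (-M) * x,
    fun _ hy => affine_le_on_eSet (minorant1 hab hf hM) hy⟩

lemma eSet_nonempty {x : ℝ} (hx : x ∈ Icc a b) :
    (eSet a b (primit a f) x).Nonempty := ⟨_, self_mem_eSet hx⟩

lemma Ee_le (hab : a ≤ b) (hf : ContinuousOn f (Icc a b))
    (hM : ∀ u ∈ Icc a b, |f u| ≤ M) {x y : ℝ}
    (hy : y ∈ eSet a b (primit a f) x) : Ee a b f x ≤ y :=
  csInf_le (bddBelow_eSet hab hf hM x) hy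

lemma le_Ee {c p x : ℝ} (h : ∀ u ∈ Icc a b, c + p * u ≤ primit a f u)
    (hx : x ∈ Icc a b) : c + p * x ≤ Ee a b f x :=
  le_csInf (eSet_nonempty hx) (fun _ hy => affine_le_on_eSet h hy)

lemma Ee_le_self (hab : a ≤ b) (hf : ContinuousOn f (Icc a b))
    (hM : ∀ u ∈ Icc a b, |f u| ≤ M) {x : ℝ} (hx : x ∈ Icc a b) :
    Ee a b f x ≤ primit a f x :=
  Ee_le hab hf hM (self_mem_eSet hx)

lemma Ee_le_chord (hab : a ≤ b) (hf : ContinuousOn f (Icc a b))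
    (hM : ∀ u ∈ Icc a b, |f u| ≤ M) {s t x : ℝ} (hs : s ∈ Icc a b)
    (ht : t ∈ Icc a b) (hsx : s ≤ x) (hxt : x ≤ t) (hst : s < t) :
    Ee a b f x ≤ primit a f s +
      (primit a f t - primit a f s) / (t - s) * (x - s) :=
  Ee_le hab hf hM (chord_mem_eSet hs ht hsx hxt hst)

lemma Ee_eq_a (hab : a ≤ b) (hf : ContinuousOn f (Icc a b))
    (hM : ∀ u ∈ Icc a b, |f u| ≤ M) : Ee a b f a = primit a f a := by
  refine le_antisymm (Ee_le_self hab hf hM ⟨le_rfl, hab⟩)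
    (le_csInf (eSet_nonempty ⟨le_rfl, hab⟩) ?_)
  rintro y ⟨lam, x₀, x₁, hlam, h0, h1, hxc, rfl⟩
  have k1 : (1 - lam) * (x₀ - a) = 0 ∧ lam * (x₁ - a) = 0 := by
    constructor <;>
      nlinarith [mul_nonneg (by linarith [hlam.2] : (0:ℝ) ≤ 1 - lam) (by linarith [h0.1] : (0:ℝ) ≤ x₀ - a),
        mul_nonneg hlam.1 (by linarith [h1.1] : (0:ℝ) ≤ x₁ - a)]
  rcases eq_or_lt_of_le hlam.1 with hl0 | hl0
  · -- lam = 0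
    have hx0 : x₀ = a := by
      have := k1.1; rw [← hl0] at this; nlinarith
    rw [← hl0, hx0]; ring_nf; exact le_rfl
  · -- lam > 0
    have hx1 : x₁ = a := by
      have := k1.2; nlinarith
    rcases eq_or_lt_of_le hlam.2 with hl1 | hl1
    · rw [hl1, hx1]; ring_nf; exact le_rfl
    · have hx0 : x₀ = a := by
        have := k1.1; nlinarith
      rw [hx0, hx1]; ring_nf; exact le_rfl

lemma Ee_eq_b (hab : a ≤ b) (hf : ContinuousOn f (Icc a b))
    (hM : ∀ u ∈ Icc a b, |f u| ≤ M) : Ee a b f b = primit a f b := by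
  refine le_antisymm (Ee_le_self hab hf hM ⟨hab, le_rfl⟩)
    (le_csInf (eSet_nonempty ⟨hab, le_rfl⟩) ?_)
  rintro y ⟨lam, x₀, x₁, hlam, h0, h1, hxc, rfl⟩
  have k1 : (1 - lam) * (b - x₀) = 0 ∧ lam * (b - x₁) = 0 := by
    constructor <;>
      nlinarith [mul_nonneg (by linarith [hlam.2] : (0:ℝ) ≤ 1 - lam) (by linarith [h0.2] : (0:ℝ) ≤ b - x₀),
        mul_nonneg hlam.1 (by linarith [h1.2] : (0:ℝ) ≤ b - x₁)]
  rcases eq_or_lt_of_le hlam.1 with hl0 | hl0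
  · have hx0 : x₀ = b := by
      have := k1.1; rw [← hl0] at this; nlinarith
    rw [← hl0, hx0]; ring_nf; exact le_rfl
  · have hx1 : x₁ = b := by
      have := k1.2; nlinarith
    rcases eq_or_lt_of_le hlam.2 with hl1 | hl1
    · rw [hl1, hx1]; ring_nf; exact le_rfl
    · have hx0 : x₀ = b := by
        have := k1.1; nlinarith
      rw [hx0, hx1]; ring_nf; exact le_rfl

lemma chord_slope_ineq (hab : a ≤ b) (hf : ContinuousOn f (Icc a b))
    (hM : ∀ u ∈ Icc a b, |f u| ≤ M) {s t x : ℝ} (hs : s ∈ Icc a b)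
    (ht : t ∈ Icc a b) (hsx : s < x) (hxt : x < t) :
    (Ee a b f x - primit a f s) / (x - s) ≤
      (primit a f t - Ee a b f x) / (t - x) := by
  have hts : (0:ℝ) < t - s := by linarith
  have h := Ee_le_chord hab hf hM hs ht hsx.le hxt.le (hsx.trans hxt)
  rw [div_le_div_iff₀ (by linarith) (by linarith)]
  have hc : (primit a f t - primit a f s) / (t - s) * (x - s) * (t - s)
      = (primit a f t - primit a f s) * (x - s) := by
    field_simp
  nlinarith [mul_le_mul_of_nonneg_right h hts.le]

lemma support_F (hab : a < b) (hf : ContinuousOn f (Icc a b))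
    (hM : ∀ u ∈ Icc a b, |f u| ≤ M) {x : ℝ} (hx : x ∈ Icc a b) :
    ∃ p : ℝ, ∀ u ∈ Icc a b, Ee a b f x + p * (u - x) ≤ primit a f u := by
  rcases eq_or_lt_of_le hx.1 with hxa | hxa
  · refine ⟨-M, fun u hu => ?_⟩
    rw [← hxa, Ee_eq_a hab.le hf hM]
    have := minorant1 hab.le hf hM u hu
    linarith
  rcases eq_or_lt_of_le hx.2 with hxb | hxb
  · refine ⟨M, fun u hu => ?_⟩
    rw [hxb, Ee_eq_b hab.le hf hM]
    have := minorant2 hab.le hf hM u hu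
    linarith
  · -- interior
    set F := primit a f with hF
    set E := Ee a b f with hE
    set LSF : Set ℝ := (fun s => (E x - F s) / (x - s)) '' (Ico a x) with hLSF
    have hne : LSF.Nonempty := ⟨_, ⟨a, ⟨le_rfl, hxa⟩, rfl⟩⟩
    have hub : ∀ r ∈ LSF, ∀ t ∈ Icc a b, x < t → r ≤ (F t - E x) / (t - x) := by
      rintro r ⟨s, hs, rfl⟩ t ht hxt
      exact chord_slope_ineq hab.le hf hM ⟨hs.1, le_trans hs.2.le hx.2⟩ ht hs.2 hxt
    have hbdd : BddAbove LSF :=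
      ⟨(F b - E x) / (b - x), fun r hr => hub r hr b ⟨hab.le, le_rfl⟩ hxb⟩
    refine ⟨sSup LSF, fun u hu => ?_⟩
    rcases lt_trichotomy u x with huz | huz | huz
    · have hmem : (E x - F u) / (x - u) ∈ LSF := ⟨u, ⟨hu.1, huz⟩, rfl⟩
      have h1 : (E x - F u) / (x - u) ≤ sSup LSF := le_csSup hbdd hmem
      rw [div_le_iff₀ (by linarith)] at h1
      nlinarith [h1]
    · rw [huz]
      simpa using Ee_le_self hab.le hf hM hx
    · have h1 : sSup LSF ≤ (F u - E x) / (u - x) :=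
        csSup_le hne (fun r hr => hub r hr u hu huz)
      rw [le_div_iff₀ (by linarith)] at h1
      nlinarith [h1]

lemma support_E (hab : a < b) (hf : ContinuousOn f (Icc a b))
    (hM : ∀ u ∈ Icc a b, |f u| ≤ M) {x : ℝ} (hx : x ∈ Icc a b) :
    ∃ p : ℝ, ∀ u ∈ Icc a b, Ee a b f x + p * (u - x) ≤ Ee a b f u := by
  obtain ⟨p, hp⟩ := support_F hab hf hM hx
  refine ⟨p, fun u hu => ?_⟩
  have h := le_Ee (c := Ee a b f x - p * x) (p := p)
    (fun v hv => by have := hp v hv; linarith) hu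
  linarith

lemma Ee_convex (hab : a < b) (hf : ContinuousOn f (Icc a b))
    (hM : ∀ u ∈ Icc a b, |f u| ≤ M) : ConvexOn ℝ (Icc a b) (Ee a b f) := by
  refine ⟨convex_Icc a b, fun u hu v hv wu wv hwu hwv hw => ?_⟩
  have hz : wu • u + wv • v ∈ Icc a b := (convex_Icc a b) hu hv hwu hwv hw
  obtain ⟨p, hp⟩ := support_E hab hf hM hz
  have h1 := hp u hu
  have h2 := hp v hv
  simp only [smul_eq_mul] at *
  have key : wu * (Ee a b f (wu*u+wv*v) + p*(u - (wu*u+wv*v)))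
      + wv * (Ee a b f (wu*u+wv*v) + p*(v - (wu*u+wv*v)))
      = Ee a b f (wu*u+wv*v) := by
    linear_combination (Ee a b f (wu*u+wv*v) - p*(wu*u+wv*v)) * hw
  linarith [mul_le_mul_of_nonneg_left h1 hwu, mul_le_mul_of_nonneg_left h2 hwv, key]

/-! ### One-sided slopes of the envelope -/

/-- Right slopes of the envelope at `x`. -/
def RS (a b : ℝ) (f : ℝ → ℝ) (x : ℝ) : Set ℝ :=
  (fun t => (Ee a b f t - Ee a b f x) / (t - x)) '' (Ioc x b)

/-- Left slopes of the envelope at `x`. -/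
def LS (a b : ℝ) (f : ℝ → ℝ) (x : ℝ) : Set ℝ :=
  (fun s => (Ee a b f x - Ee a b f s) / (x - s)) '' (Ico a x)

lemma div_flip {A B C D : ℝ} (h1 : A = -B) (h2 : C = -D) : A / C = B / D := by
  rw [h1, h2, neg_div_neg_eq]

lemma ls_le_rs (hab : a < b) (hf : ContinuousOn f (Icc a b))
    (hM : ∀ u ∈ Icc a b, |f u| ≤ M) {x l r : ℝ} (hx : x ∈ Icc a b)
    (hl : l ∈ LS a b f x) (hr : r ∈ RS a b f x) : l ≤ r := by
  obtain ⟨s, hs, rfl⟩ := hl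
  obtain ⟨t, ht, rfl⟩ := hr
  have h := (Ee_convex hab hf hM).secant_mono hx ⟨hs.1, le_trans hs.2.le hx.2⟩
    ⟨le_trans hx.1 ht.1.le, ht.2⟩ (ne_of_lt hs.2) (ne_of_gt ht.1)
    (le_trans hs.2.le ht.1.le)
  have e : (Ee a b f x - Ee a b f s) / (x - s)
      = (Ee a b f s - Ee a b f x) / (s - x) := div_flip (by ring) (by ring)
  dsimp only
  rw [e]; exact h

lemma nonempty_RS (hab : a < b) {x : ℝ} (hx : x ∈ Ico a b) :
    (RS a b f x).Nonempty := ⟨_, ⟨b, ⟨hx.2, le_rfl⟩, rfl⟩⟩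

lemma nonempty_LS (hab : a < b) {x : ℝ} (hx : x ∈ Ioc a b) :
    (LS a b f x).Nonempty := ⟨_, ⟨a, ⟨le_rfl, hx.1⟩, rfl⟩⟩

lemma support_lb_RS (hab : a < b) (hf : ContinuousOn f (Icc a b))
    (hM : ∀ u ∈ Icc a b, |f u| ≤ M) {x p0 : ℝ} (hx : x ∈ Icc a b)
    (hp0 : ∀ u ∈ Icc a b, Ee a b f x + p0 * (u - x) ≤ Ee a b f u) :
    ∀ r ∈ RS a b f x, p0 ≤ r := by
  rintro r ⟨t, ht, rfl⟩
  rw [le_div_iff₀ (by linarith [ht.1] : (0:ℝ) < t - x)]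
  have := hp0 t ⟨le_trans hx.1 ht.1.le, ht.2⟩
  linarith

lemma support_ub_LS (hab : a < b) (hf : ContinuousOn f (Icc a b))
    (hM : ∀ u ∈ Icc a b, |f u| ≤ M) {x p0 : ℝ} (hx : x ∈ Icc a b)
    (hp0 : ∀ u ∈ Icc a b, Ee a b f x + p0 * (u - x) ≤ Ee a b f u) :
    ∀ l ∈ LS a b f x, l ≤ p0 := by
  rintro l ⟨s, hs, rfl⟩
  rw [div_le_iff₀ (by linarith [hs.2] : (0:ℝ) < x - s)]
  have := hp0 s ⟨hs.1, le_trans hs.2.le hx.2⟩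
  linarith

lemma tendsto_right (hab : a < b) (hf : ContinuousOn f (Icc a b))
    (hM : ∀ u ∈ Icc a b, |f u| ≤ M) {x : ℝ} (hx : x ∈ Ico a b) :
    Tendsto (fun t => (Ee a b f t - Ee a b f x) / (t - x)) (𝓝[Ioc x b] x)
      (𝓝 (sInf (RS a b f x))) := by
  have hxI : x ∈ Icc a b := ⟨hx.1, hx.2.le⟩
  obtain ⟨p0, hp0⟩ := support_E hab hf hM hxI
  have hlb := support_lb_RS hab hf hM hxI hp0
  have hbdd : BddBelow (RS a b f x) := ⟨p0, hlb⟩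
  have hRne : (RS a b f x).Nonempty := nonempty_RS hab hx
  refine tendsto_order.2 ⟨fun c hc => ?_, fun c hc => ?_⟩
  · filter_upwards [eventually_mem_nhdsWithin] with t ht
    exact lt_of_lt_of_le hc (csInf_le hbdd ⟨t, ht, rfl⟩)
  · obtain ⟨r, hrmem, hrc⟩ := exists_lt_of_csInf_lt hRne hc
    obtain ⟨t₀, ht₀, rfl⟩ := hrmem
    have hevlt : ∀ᶠ t in 𝓝[Ioc x b] x, t < t₀ :=
      mem_nhdsWithin_of_mem_nhds (Iio_mem_nhds ht₀.1)
    filter_upwards [eventually_mem_nhdsWithin, hevlt] with t htm htlt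
    dsimp only at hrc ⊢
    refine lt_of_le_of_lt ?_ hrc
    exact (Ee_convex hab hf hM).secant_mono hxI
      ⟨le_trans hxI.1 htm.1.le, htm.2⟩ ⟨le_trans hxI.1 ht₀.1.le, ht₀.2⟩
      (ne_of_gt htm.1) (ne_of_gt ht₀.1) htlt.le

lemma tendsto_left (hab : a < b) (hf : ContinuousOn f (Icc a b))
    (hM : ∀ u ∈ Icc a b, |f u| ≤ M) {x : ℝ} (hx : x ∈ Ioc a b) :
    Tendsto (fun s => (Ee a b f x - Ee a b f s) / (x - s)) (𝓝[Ico a x] x)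
      (𝓝 (sSup (LS a b f x))) := by
  have hxI : x ∈ Icc a b := ⟨hx.1.le, hx.2⟩
  obtain ⟨p0, hp0⟩ := support_E hab hf hM hxI
  have hub := support_ub_LS hab hf hM hxI hp0
  have hbdd : BddAbove (LS a b f x) := ⟨p0, hub⟩
  have hLne : (LS a b f x).Nonempty := nonempty_LS hab hx
  refine tendsto_order.2 ⟨fun c hc => ?_, fun c hc => ?_⟩
  · obtain ⟨l, hlmem, hlc⟩ := exists_lt_of_lt_csSup hLne hc
    obtain ⟨s₀, hs₀, rfl⟩ := hlmem
    have hevgt : ∀ᶠ s in 𝓝[Ico a x] x, s₀ < s :=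
      mem_nhdsWithin_of_mem_nhds (Ioi_mem_nhds hs₀.2)
    filter_upwards [eventually_mem_nhdsWithin, hevgt] with s hsm hsgt
    dsimp only at hlc ⊢
    refine lt_of_lt_of_le hlc ?_
    have h := (Ee_convex hab hf hM).secant_mono hxI
      ⟨hs₀.1, le_trans hs₀.2.le hxI.2⟩ ⟨hsm.1, le_trans hsm.2.le hxI.2⟩
      (ne_of_lt hs₀.2) (ne_of_lt hsm.2) hsgt.le
    have e1 : (Ee a b f x - Ee a b f s₀) / (x - s₀)
        = (Ee a b f s₀ - Ee a b f x) / (s₀ - x) := div_flip (by ring) (by ring)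
    have e2 : (Ee a b f x - Ee a b f s) / (x - s)
        = (Ee a b f s - Ee a b f x) / (s - x) := div_flip (by ring) (by ring)
    rw [e1, e2]; exact h
  · filter_upwards [eventually_mem_nhdsWithin] with s hs
    exact lt_of_le_of_lt (le_csSup hbdd ⟨s, hs, rfl⟩) hc

lemma Icc_diff_left (hab : a < b) : Icc a b \ {a} = Ioc a b := by
  ext u
  simp only [mem_diff, mem_Icc, mem_singleton_iff, mem_Ioc]
  constructor
  · rintro ⟨⟨h1, h2⟩, h3⟩; exact ⟨lt_of_le_of_ne h1 (Ne.symm h3), h2⟩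
  · rintro ⟨h1, h2⟩; exact ⟨⟨h1.le, h2⟩, (ne_of_gt h1)⟩

lemma Icc_diff_right (hab : a < b) : Icc a b \ {b} = Ico a b := by
  ext u
  simp only [mem_diff, mem_Icc, mem_singleton_iff, mem_Ico]
  constructor
  · rintro ⟨⟨h1, h2⟩, h3⟩; exact ⟨h1, lt_of_le_of_ne h2 h3⟩
  · rintro ⟨h1, h2⟩; exact ⟨⟨h1, h2.le⟩, (ne_of_lt h2)⟩

lemma hasDeriv_a (hab : a < b) (hf : ContinuousOn f (Icc a b))
    (hM : ∀ u ∈ Icc a b, |f u| ≤ M) :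
    HasDerivWithinAt (Ee a b f) (sInf (RS a b f a)) (Icc a b) a := by
  rw [hasDerivWithinAt_iff_tendsto_slope, Icc_diff_left hab]
  exact (tendsto_right hab hf hM ⟨le_rfl, hab⟩).congr
    (fun t => (slope_def_field (Ee a b f) a t).symm)

lemma hasDeriv_b (hab : a < b) (hf : ContinuousOn f (Icc a b))
    (hM : ∀ u ∈ Icc a b, |f u| ≤ M) :
    HasDerivWithinAt (Ee a b f) (sSup (LS a b f b)) (Icc a b) b := by
  rw [hasDerivWithinAt_iff_tendsto_slope, Icc_diff_right hab]
  refine (tendsto_left hab hf hM ⟨hab, le_rfl⟩).congr (fun s => ?_)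
  rw [slope_def_field]
  exact div_flip (by ring) (by ring)

/-! ### The representation of the envelope via a minimizing pair -/

lemma rep_aux (hab : a < b) (hf : ContinuousOn f (Icc a b))
    (hM : ∀ u ∈ Icc a b, |f u| ≤ M) {x lam x₀ x₁ : ℝ} (hx : x ∈ Icc a b)
    (hlam : lam ∈ Icc (0:ℝ) 1) (h0 : x₀ ∈ Icc a b) (h1 : x₁ ∈ Icc a b)
    (h01 : x₀ ≤ x₁) (hcomb : (1 - lam) * x₀ + lam * x₁ = x)
    (hval : Ee a b f x = (1 - lam) * primit a f x₀ + lam * primit a f x₁)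
    (hEF : Ee a b f x ≠ primit a f x) :
    ∃ s t : ℝ, s ∈ Icc a b ∧ t ∈ Icc a b ∧ s < x ∧ x < t ∧
      Ee a b f x = primit a f s +
        (primit a f t - primit a f s) / (t - s) * (x - s) := by
  have hx0x : x₀ ≤ x := by nlinarith [hlam.1, hlam.2]
  have hxx1 : x ≤ x₁ := by nlinarith [hlam.1, hlam.2]
  have hne : x₀ < x₁ := by
    rcases eq_or_lt_of_le h01 with he | hlt
    · exfalso
      apply hEF
      have hxx0 : x₀ = x := by linear_combination hcomb + lam * he
      rw [hval, ← he, hxx0]; ring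
    · exact hlt
  have hsx : x₀ < x := by
    rcases eq_or_lt_of_le hx0x with he | h
    · exfalso
      apply hEF
      have h₂ : lam * (x₁ - x₀) = 0 := by linear_combination hcomb - he
      rcases mul_eq_zero.1 h₂ with hl0 | hx10
      · rw [hval, hl0, he]; ring
      · exact absurd (by linarith : x₀ = x₁) (ne_of_lt hne)
    · exact h
  have hxt : x < x₁ := by
    rcases eq_or_lt_of_le hxx1 with he | h
    · exfalso
      apply hEF
      have h₂ : (1 - lam) * (x₁ - x₀) = 0 := by linear_combination - hcomb - he
      rcases mul_eq_zero.1 h₂ with hl1 | hx10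
      · have : lam = 1 := by linarith
        rw [hval, this, ← he]; ring
      · exact absurd (by linarith : x₀ = x₁) (ne_of_lt hne)
    · exact h
  refine ⟨x₀, x₁, h0, h1, hsx, hxt, ?_⟩
  have hl : lam = (x - x₀) / (x₁ - x₀) := by
    rw [eq_div_iff (by linarith : x₁ - x₀ ≠ 0)]
    linear_combination hcomb
  rw [hval, hl]
  field_simp
  ring

lemma env_rep (hab : a < b) (hf : ContinuousOn f (Icc a b))
    (hM : ∀ u ∈ Icc a b, |f u| ≤ M) {x : ℝ} (hx : x ∈ Icc a b) :
    Ee a b f x = primit a f x ∨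
    ∃ s t : ℝ, s ∈ Icc a b ∧ t ∈ Icc a b ∧ s < x ∧ x < t ∧
      Ee a b f x = primit a f s +
        (primit a f t - primit a f s) / (t - s) * (x - s) := by
  classical
  by_cases hEF : Ee a b f x = primit a f x
  · exact Or.inl hEF
  right
  have hKc : IsCompact ((Icc (0:ℝ) 1 ×ˢ Icc a b ×ˢ Icc a b) ∩
      {q : ℝ × ℝ × ℝ | (1 - q.1) * q.2.1 + q.1 * q.2.2 = x}) :=
    (isCompact_Icc.prod (isCompact_Icc.prod isCompact_Icc)).inter_right
      (isClosed_eq (by fun_prop) continuous_const)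
  have hKne : ((Icc (0:ℝ) 1 ×ˢ Icc a b ×ˢ Icc a b) ∩
      {q : ℝ × ℝ × ℝ | (1 - q.1) * q.2.1 + q.1 * q.2.2 = x}).Nonempty := by
    refine ⟨(0, x, x), ⟨?_, ?_⟩⟩
    · exact ⟨by norm_num, hx, hx⟩
    · show (1 - 0) * x + 0 * x = x
      ring
  have hFc : ContinuousOn (primit a f) (Icc a b) := primit_cont hab.le hf
  have hΦc : ContinuousOn
      (fun q : ℝ × ℝ × ℝ => (1 - q.1) * primit a f q.2.1 + q.1 * primit a f q.2.2)
      ((Icc (0:ℝ) 1 ×ˢ Icc a b ×ˢ Icc a b) ∩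
        {q : ℝ × ℝ × ℝ | (1 - q.1) * q.2.1 + q.1 * q.2.2 = x}) := by
    apply ContinuousOn.add
    · exact ((continuous_const.sub continuous_fst).continuousOn).mul
        (hFc.comp (continuous_fst.comp continuous_snd).continuousOn
          (fun q hq => hq.1.2.1))
    · exact (continuous_fst.continuousOn).mul
        (hFc.comp (continuous_snd.comp continuous_snd).continuousOn
          (fun q hq => hq.1.2.2))
  obtain ⟨q₀, hq₀K, hmin⟩ := hKc.exists_isMinOn hKne hΦc
  obtain ⟨lam, x₀, x₁⟩ := q₀
  obtain ⟨⟨hlam, h0, h1⟩, hcomb⟩ := hq₀K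
  have hcomb' : (1 - lam) * x₀ + lam * x₁ = x := hcomb
  have hEq : Ee a b f x = (1 - lam) * primit a f x₀ + lam * primit a f x₁ := by
    refine le_antisymm
      (Ee_le hab.le hf hM ⟨lam, x₀, x₁, hlam, h0, h1, hcomb', rfl⟩)
      (le_csInf (eSet_nonempty hx) ?_)
    rintro y ⟨l, y₀, y₁, hl, hy0, hy1, hyc, rfl⟩
    exact isMinOn_iff.1 hmin (l, y₀, y₁) ⟨⟨hl, hy0, hy1⟩, hyc⟩
  rcases le_total x₀ x₁ with h01 | h01
  · exact rep_aux hab hf hM hx hlam h0 h1 h01 hcomb' hEq hEF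
  · refine rep_aux hab hf hM hx (lam := 1 - lam) (x₀ := x₁) (x₁ := x₀)
      ⟨by linarith [hlam.2], by linarith [hlam.1]⟩ h1 h0 h01
      (by linear_combination hcomb') (by rw [hEq]; ring) hEF

/-! ### Pinching at contact points -/

lemma pinch_right (hab : a < b) (hf : ContinuousOn f (Icc a b)) {x p : ℝ}
    (hx : x ∈ Ico a b)
    (hsupp : ∀ u ∈ Icc a b, primit a f x + p * (u - x) ≤ primit a f u) :
    p ≤ f x := by
  have hD := primit_hasDeriv hab.le hf ⟨hx.1, hx.2.le⟩
  have ht := hasDerivWithinAt_iff_tendsto_slope.1 hD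
  have hmono : 𝓝[Ioc x b] x ≤ 𝓝[Icc a b \ {x}] x :=
    nhdsWithin_mono _
      (fun t ht' => ⟨⟨le_trans hx.1 ht'.1.le, ht'.2⟩, ne_of_gt ht'.1⟩)
  haveI : (𝓝[Ioc x b] x).NeBot := by
    rw [nhdsWithin_Ioc_eq_nhdsGT hx.2]; infer_instance
  refine ge_of_tendsto (ht.mono_left hmono) ?_
  filter_upwards [eventually_mem_nhdsWithin] with t ht2
  rw [slope_def_field, le_div_iff₀ (by linarith [ht2.1] : (0:ℝ) < t - x)]
  have := hsupp t ⟨le_trans hx.1 ht2.1.le, ht2.2⟩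
  linarith

lemma pinch_left (hab : a < b) (hf : ContinuousOn f (Icc a b)) {x p : ℝ}
    (hx : x ∈ Ioc a b)
    (hsupp : ∀ u ∈ Icc a b, primit a f x + p * (u - x) ≤ primit a f u) :
    f x ≤ p := by
  have hD := primit_hasDeriv hab.le hf ⟨hx.1.le, hx.2⟩
  have ht := hasDerivWithinAt_iff_tendsto_slope.1 hD
  have hmono : 𝓝[Ico a x] x ≤ 𝓝[Icc a b \ {x}] x :=
    nhdsWithin_mono _
      (fun s hs' => ⟨⟨hs'.1, le_trans hs'.2.le hx.2⟩, ne_of_lt hs'.2⟩)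
  haveI : (𝓝[Ico a x] x).NeBot := by
    rw [nhdsWithin_Ico_eq_nhdsLT hx.1]; infer_instance
  refine le_of_tendsto (ht.mono_left hmono) ?_
  filter_upwards [eventually_mem_nhdsWithin] with s hs2
  rw [slope_def_field, div_le_iff_of_neg (by linarith [hs2.2] : s - x < 0)]
  have := hsupp s ⟨hs2.1, le_trans hs2.2.le hx.2⟩
  linarith

/-! ### Differentiability at interior points -/

lemma Icc_diff_mem (hx : x ∈ Icc a b) :
    Icc a b \ {x} = Ico a x ∪ Ioc x b := by
  ext u
  simp only [mem_diff, mem_Icc, mem_singleton_iff, mem_union, mem_Ico, mem_Ioc]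
  constructor
  · rintro ⟨⟨h1, h2⟩, h3⟩
    rcases lt_or_gt_of_ne h3 with h | h
    · exact Or.inl ⟨h1, h⟩
    · exact Or.inr ⟨h, h2⟩
  · rintro (⟨h1, h2⟩ | ⟨h1, h2⟩)
    · exact ⟨⟨h1, le_trans h2.le hx.2⟩, ne_of_lt h2⟩
    · exact ⟨⟨le_trans hx.1 h1.le, h2⟩, ne_of_gt h1⟩

lemma hasDeriv_interior (hab : a < b) (hf : ContinuousOn f (Icc a b))
    (hM : ∀ u ∈ Icc a b, |f u| ≤ M) {x : ℝ} (hx : x ∈ Ioo a b) :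
    ∃ p : ℝ, HasDerivWithinAt (Ee a b f) p (Icc a b) x ∧
      (∀ u ∈ Icc a b, Ee a b f x + p * (u - x) ≤ Ee a b f u) ∧
      (∃ s ∈ Icc a b, s ≤ x ∧ primit a f s = Ee a b f x + p * (s - x)) ∧
      (∃ t ∈ Icc a b, x ≤ t ∧ primit a f t = Ee a b f x + p * (t - x)) := by
  have hxI : x ∈ Icc a b := ⟨hx.1.le, hx.2.le⟩
  have hRne := nonempty_RS (f := f) hab ⟨hxI.1, hx.2⟩
  have hLne := nonempty_LS (f := f) hab ⟨hx.1, hxI.2⟩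
  obtain ⟨l₀, hl₀⟩ := hLne
  obtain ⟨r₀, hr₀⟩ := hRne
  have hbddR : BddBelow (RS a b f x) :=
    ⟨l₀, fun r hr => ls_le_rs hab hf hM hxI hl₀ hr⟩
  have hbddL : BddAbove (LS a b f x) :=
    ⟨r₀, fun l hl => ls_le_rs hab hf hM hxI hl hr₀⟩
  have hmple : sSup (LS a b f x) ≤ sInf (RS a b f x) :=
    csSup_le ⟨l₀, hl₀⟩
      (fun l hl => le_csInf ⟨r₀, hr₀⟩ (fun r hr => ls_le_rs hab hf hM hxI hl hr))
  have hsuppP : ∀ u ∈ Icc a b,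
      Ee a b f x + sInf (RS a b f x) * (u - x) ≤ Ee a b f u := by
    intro u hu
    rcases lt_trichotomy u x with h | h | h
    · have h1 : (Ee a b f x - Ee a b f u) / (x - u) ≤ sSup (LS a b f x) :=
        le_csSup hbddL ⟨u, ⟨hu.1, h⟩, rfl⟩
      rw [div_le_iff₀ (by linarith)] at h1
      have h2 : sSup (LS a b f x) * (x - u) ≤ sInf (RS a b f x) * (x - u) :=
        mul_le_mul_of_nonneg_right hmple (by linarith)
      linarith
    · rw [h]; simp
    · have h1 : sInf (RS a b f x) ≤ (Ee a b f u - Ee a b f x) / (u - x) :=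
        csInf_le hbddR ⟨u, ⟨h, hu.2⟩, rfl⟩
      rw [le_div_iff₀ (by linarith)] at h1
      linarith
  have hsuppM : ∀ u ∈ Icc a b,
      Ee a b f x + sSup (LS a b f x) * (u - x) ≤ Ee a b f u := by
    intro u hu
    rcases lt_trichotomy u x with h | h | h
    · have h1 : (Ee a b f x - Ee a b f u) / (x - u) ≤ sSup (LS a b f x) :=
        le_csSup hbddL ⟨u, ⟨hu.1, h⟩, rfl⟩
      rw [div_le_iff₀ (by linarith)] at h1
      linarith
    · rw [h]; simp
    · have h1 : sInf (RS a b f x) ≤ (Ee a b f u - Ee a b f x) / (u - x) :=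
        csInf_le hbddR ⟨u, ⟨h, hu.2⟩, rfl⟩
      rw [le_div_iff₀ (by linarith)] at h1
      have h2 : sSup (LS a b f x) * (u - x) ≤ sInf (RS a b f x) * (u - x) :=
        mul_le_mul_of_nonneg_right hmple (by linarith)
      linarith
  have hder : sInf (RS a b f x) = sSup (LS a b f x) →
      HasDerivWithinAt (Ee a b f) (sInf (RS a b f x)) (Icc a b) x := by
    intro hpe
    rw [hasDerivWithinAt_iff_tendsto_slope, Icc_diff_mem hxI, nhdsWithin_union]
    refine tendsto_sup.2 ⟨?_, ?_⟩
    · rw [hpe]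
      exact (tendsto_left hab hf hM ⟨hx.1, hxI.2⟩).congr
        (fun s => by rw [slope_def_field]; exact div_flip (by ring) (by ring))
    · exact (tendsto_right hab hf hM ⟨hxI.1, hx.2⟩).congr
        (fun t => (slope_def_field _ _ _).symm)
  rcases env_rep hab hf hM hxI with hEF | ⟨s, t, hsI, htI, hsx, hxt, hrep⟩
  · -- contact case
    have hFP : ∀ u ∈ Icc a b,
        primit a f x + sInf (RS a b f x) * (u - x) ≤ primit a f u := by
      intro u hu
      have h1 := hsuppP u hu
      have h2 := Ee_le_self hab.le hf hM hu
      rw [hEF] at h1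
      linarith
    have hFM : ∀ u ∈ Icc a b,
        primit a f x + sSup (LS a b f x) * (u - x) ≤ primit a f u := by
      intro u hu
      have h1 := hsuppM u hu
      have h2 := Ee_le_self hab.le hf hM hu
      rw [hEF] at h1
      linarith
    have h1 : sInf (RS a b f x) ≤ f x := pinch_right hab hf ⟨hxI.1, hx.2⟩ hFP
    have h2 : f x ≤ sSup (LS a b f x) := pinch_left hab hf ⟨hx.1, hxI.2⟩ hFM
    have hpe : sInf (RS a b f x) = sSup (LS a b f x) := le_antisymm (by linarith) hmple
    exact ⟨sInf (RS a b f x), hder hpe, hsuppP,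
      ⟨x, hxI, le_rfl, by rw [hEF]; ring⟩, ⟨x, hxI, le_rfl, by rw [hEF]; ring⟩⟩
  · -- chord case
    have hts : (0:ℝ) < t - s := by linarith
    have hFt : primit a f t = primit a f s +
        (primit a f t - primit a f s) / (t - s) * (t - s) := by
      rw [div_mul_cancel₀ _ (ne_of_gt hts)]; ring
    have key : ∀ p', (∀ u ∈ Icc a b, Ee a b f x + p' * (u - x) ≤ Ee a b f u) →
        p' = (primit a f t - primit a f s) / (t - s) := by
      intro p' hp'
      have h1 : Ee a b f x + p' * (s - x) ≤ primit a f s :=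
        le_trans (hp' s hsI) (Ee_le_self hab.le hf hM hsI)
      have h2 : Ee a b f x + p' * (t - x) ≤ primit a f t :=
        le_trans (hp' t htI) (Ee_le_self hab.le hf hM htI)
      have hxs : (0:ℝ) < x - s := by linarith
      have htx : (0:ℝ) < t - x := by linarith
      have hle1 : (primit a f t - primit a f s) / (t - s) ≤ p' := by
        nlinarith [h1, hrep, hxs]
      have hle2 : p' ≤ (primit a f t - primit a f s) / (t - s) := by
        nlinarith [h2, hrep, hFt, htx]
      linarith
    have hkP := key _ hsuppP
    have hkM := key _ hsuppM
    have hpe : sInf (RS a b f x) = sSup (LS a b f x) := by rw [hkP, hkM]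
    refine ⟨sInf (RS a b f x), hder hpe, hsuppP, ⟨s, hsI, hsx.le, ?_⟩,
      ⟨t, htI, hxt.le, ?_⟩⟩
    · rw [hkP]; linear_combination (-1 : ℝ) * hrep
    · rw [hkP]; linear_combination hFt - hrep

/-! ### Master packaging lemma -/

lemma abs_bound (hf : ContinuousOn f (Icc a b)) :
    ∃ M, ∀ u ∈ Icc a b, |f u| ≤ M := by
  obtain ⟨M, hM⟩ := isCompact_Icc.exists_bound_of_continuousOn hf
  exact ⟨M, fun u hu => by simpa [Real.norm_eq_abs] using hM u hu⟩

lemma Ee_le_self' (hab : a < b) (hf : ContinuousOn f (Icc a b)) {x : ℝ}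
    (hx : x ∈ Icc a b) : Ee a b f x ≤ primit a f x := by
  obtain ⟨M, hM⟩ := abs_bound hf
  exact Ee_le_self hab.le hf hM hx

lemma master (hab : a < b) (hf : ContinuousOn f (Icc a b)) {x : ℝ}
    (hx : x ∈ Icc a b) :
    HasDerivWithinAt (Ee a b f) (Tcv a b f x) (Icc a b) x ∧
    (∀ u ∈ Icc a b, Ee a b f x + Tcv a b f x * (u - x) ≤ Ee a b f u) ∧
    (x ∈ Ioo a b →
      (∃ s ∈ Icc a b, s ≤ x ∧
        primit a f s = Ee a b f x + Tcv a b f x * (s - x)) ∧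
      (∃ t ∈ Icc a b, x ≤ t ∧
        primit a f t = Ee a b f x + Tcv a b f x * (t - x))) := by
  obtain ⟨M, hM⟩ := abs_bound hf
  rcases eq_or_lt_of_le hx.1 with hxa | hxa
  · -- x = a
    subst hxa
    have haI : a ∈ Icc a b := ⟨le_rfl, hab.le⟩
    have hd := hasDeriv_a hab hf hM
    have hTcv : Tcv a b f a = sInf (RS a b f a) := by
      rw [Tcv_eq]; exact hd.derivWithin ((uniqueDiffOn_Icc hab) a haI)
    rw [hTcv]
    obtain ⟨p0, hp0⟩ := support_E hab hf hM haI
    have hbddR : BddBelow (RS a b f a) := ⟨p0, support_lb_RS hab hf hM haI hp0⟩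
    refine ⟨hd, ?_, fun hmem => absurd hmem.1 (lt_irrefl a)⟩
    intro u hu
    rcases eq_or_lt_of_le hu.1 with h | h
    · rw [← h]; simp
    · have h1 : sInf (RS a b f a) ≤ (Ee a b f u - Ee a b f a) / (u - a) :=
        csInf_le hbddR ⟨u, ⟨h, hu.2⟩, rfl⟩
      rw [le_div_iff₀ (by linarith)] at h1
      linarith
  rcases eq_or_lt_of_le hx.2 with hxb | hxb
  · -- x = b
    rw [hxb]
    have hbI : b ∈ Icc a b := ⟨hab.le, le_rfl⟩
    have hd := hasDeriv_b hab hf hM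
    have hTcv : Tcv a b f b = sSup (LS a b f b) := by
      rw [Tcv_eq]; exact hd.derivWithin ((uniqueDiffOn_Icc hab) b hbI)
    rw [hTcv]
    obtain ⟨p0, hp0⟩ := support_E hab hf hM hbI
    have hbddL : BddAbove (LS a b f b) := ⟨p0, support_ub_LS hab hf hM hbI hp0⟩
    refine ⟨hd, ?_, fun hmem => absurd hmem.2 (lt_irrefl b)⟩
    intro u hu
    rcases eq_or_lt_of_le hu.2 with h | h
    · rw [h]; simp
    · have h1 : (Ee a b f b - Ee a b f u) / (b - u) ≤ sSup (LS a b f b) :=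
        le_csSup hbddL ⟨u, ⟨hu.1, h⟩, rfl⟩
      rw [div_le_iff₀ (by linarith)] at h1
      linarith
  · obtain ⟨p, hd, hsupp, htl, htr⟩ := hasDeriv_interior hab hf hM ⟨hxa, hxb⟩
    have hTcv : Tcv a b f x = p := by
      rw [Tcv_eq]; exact hd.derivWithin ((uniqueDiffOn_Icc hab) x hx)
    rw [hTcv]
    exact ⟨hd, hsupp, fun _ => ⟨htl, htr⟩⟩

lemma Ee_contOn (hab : a < b) (hf : ContinuousOn f (Icc a b)) :
    ContinuousOn (Ee a b f) (Icc a b) :=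
  fun y hy => ((master hab hf hy).1).continuousWithinAt

lemma primit_mono {g : ℝ → ℝ} (hab : a ≤ b) (hf : ContinuousOn f (Icc a b))
    (hg : ContinuousOn g (Icc a b)) (hle : ∀ u ∈ Icc a b, f u ≤ g u)
    {s t : ℝ} (hs : s ∈ Icc a b) (ht : t ∈ Icc a b) (hst : s ≤ t) :
    primit a f t - primit a f s ≤ primit a g t - primit a g s := by
  rw [primit_sub hab hf hs ht, primit_sub hab hg hs ht]
  refine intervalIntegral.integral_mono_on hst
    (primit_intervalIntegrable hf hs ht) (primit_intervalIntegrable hg hs ht) ?_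
  intro u hu
  exact hle u ⟨le_trans hs.1 hu.1, le_trans hu.2 ht.2⟩

end TcvAux

open TcvAux in
/-- Monotonicity of `T`: if `f ≤ g` on `[a,b]`, then `Tf ≤ Tg` on `[a,b]`. -/
theorem Tcv_monotone (a b : ℝ) (hab : a < b) (f g : ℝ → ℝ)
    (hf : ContinuousOn f (Set.Icc a b)) (hg : ContinuousOn g (Set.Icc a b))
    (hle : ∀ x ∈ Set.Icc a b, f x ≤ g x) :
    ∀ x ∈ Set.Icc a b, Tcv a b f x ≤ Tcv a b g x := by
  have hint : ∀ x ∈ Ioo a b, Tcv a b f x ≤ Tcv a b g x := by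
    intro x hx
    have hxI : x ∈ Icc a b := Ioo_subset_Icc_self hx
    obtain ⟨hdf, hsf, htf⟩ := master hab hf hxI
    obtain ⟨hdg, hsg, htg⟩ := master hab hg hxI
    obtain ⟨s, hsI, hsx, hseq⟩ := (htf hx).1
    obtain ⟨t, htI, hxt, hteq⟩ := (htg hx).2
    by_cases hst : s < t
    · have h1 : Ee a b f x + Tcv a b f x * (t - x) ≤ primit a f t :=
        le_trans (hsf t htI) (Ee_le_self' hab hf htI)
      have h4 : Ee a b g x + Tcv a b g x * (s - x) ≤ primit a g s :=
        le_trans (hsg s hsI) (Ee_le_self' hab hg hsI)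
      have h5 := primit_mono hab.le hf hg hle hsI htI hst.le
      have hkey : Tcv a b f x * (t - s) ≤ Tcv a b g x * (t - s) := by
        have e1 : Tcv a b f x * (t - x) - Tcv a b f x * (s - x)
            = Tcv a b f x * (t - s) := by ring
        have e2 : Tcv a b g x * (t - x) - Tcv a b g x * (s - x)
            = Tcv a b g x * (t - s) := by ring
        linarith [hseq, hteq]
      exact (mul_le_mul_iff_of_pos_right (sub_pos.2 hst)).1 hkey
    · have hxt' : t ≤ s := by linarith [not_lt.1 hst]
      have hsx' : s = x := le_antisymm hsx (le_trans hxt hxt')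
      have htx' : t = x := le_antisymm (hxt'.trans hsx'.le) hxt
      have hcf : Ee a b f x = primit a f x := by
        rw [hsx'] at hseq; linarith [hseq]
      have hcg : Ee a b g x = primit a g x := by
        rw [htx'] at hteq; linarith [hteq]
      have hsuppF : ∀ u ∈ Icc a b,
          primit a f x + Tcv a b f x * (u - x) ≤ primit a f u := by
        intro u hu
        have h1 := hsf u hu
        have h2 := Ee_le_self' hab hf hu
        rw [hcf] at h1
        linarith
      have hsuppG : ∀ u ∈ Icc a b,
          primit a g x + Tcv a b g x * (u - x) ≤ primit a g u := by
        intro u hu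
        have h1 := hsg u hu
        have h2 := Ee_le_self' hab hg hu
        rw [hcg] at h1
        linarith
      have hf1 : Tcv a b f x ≤ f x :=
        pinch_right hab hf ⟨hxI.1, hx.2⟩ hsuppF
      have hg2 : g x ≤ Tcv a b g x :=
        pinch_left hab hg ⟨hx.1, hxI.2⟩ hsuppG
      linarith [hle x hxI]
  intro x hx
  rcases eq_or_lt_of_le hx.1 with hxa | hxa
  · -- x = a
    subst hxa
    have haI : a ∈ Icc a b := ⟨le_rfl, hab.le⟩
    obtain ⟨hdf, hsf, _⟩ := master hab hf haI
    obtain ⟨hdg, hsg, _⟩ := master hab hg haI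
    have ht := hasDerivWithinAt_iff_tendsto_slope.1 hdg
    rw [Icc_diff_left hab] at ht
    haveI : (𝓝[Ioc a b] a).NeBot := by
      rw [nhdsWithin_Ioc_eq_nhdsGT hab]; infer_instance
    refine ge_of_tendsto ht ?_
    have hevb : ∀ᶠ t in 𝓝[Ioc a b] a, t < b :=
      mem_nhdsWithin_of_mem_nhds (Iio_mem_nhds hab)
    filter_upwards [eventually_mem_nhdsWithin, hevb] with t htm htb
    rw [slope_def_field]
    have hcg : ContinuousOn (Ee a b g) (Icc a t) :=
      (Ee_contOn hab hg).mono (Icc_subset_Icc le_rfl htm.2)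
    have hdiff : ∀ y ∈ Ioo a t, HasDerivAt (Ee a b g) (Tcv a b g y) y := by
      intro y hy
      have hyI : y ∈ Icc a b := ⟨hy.1.le, le_trans hy.2.le htm.2⟩
      exact ((master hab hg hyI).1).hasDerivAt
        (Icc_mem_nhds hy.1 (lt_trans hy.2 htb))
    obtain ⟨ξ, hξ, hslope⟩ :=
      exists_hasDerivAt_eq_slope (Ee a b g) _ htm.1 hcg hdiff
    rw [← hslope]
    have hξI : ξ ∈ Icc a b := ⟨hξ.1.le, (lt_trans hξ.2 htb).le⟩
    have hξIoo : ξ ∈ Ioo a b := ⟨hξ.1, lt_trans hξ.2 htb⟩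
    obtain ⟨hdfξ, hsfξ, _⟩ := master hab hf hξI
    have c1 : Tcv a b f a * (ξ - a) ≤ Ee a b f ξ - Ee a b f a := by
      have := hsf ξ hξI; linarith
    have c2 : Ee a b f ξ - Ee a b f a ≤ Tcv a b f ξ * (ξ - a) := by
      have := hsfξ a haI; linarith
    have c3 : Tcv a b f ξ ≤ Tcv a b g ξ := hint ξ hξIoo
    have hξa : (0:ℝ) < ξ - a := by linarith [hξ.1]
    have hchain : Tcv a b f a * (ξ - a) ≤ Tcv a b g ξ * (ξ - a) := by
      have h6 := mul_le_mul_of_nonneg_right c3 hξa.le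
      linarith [c1, c2, h6]
    exact (mul_le_mul_iff_of_pos_right hξa).1 hchain
  rcases eq_or_lt_of_le hx.2 with hxb | hxb
  · -- x = b
    rw [hxb]
    have hbI : b ∈ Icc a b := ⟨hab.le, le_rfl⟩
    obtain ⟨hdf, hsf, _⟩ := master hab hf hbI
    obtain ⟨hdg, hsg, _⟩ := master hab hg hbI
    have ht := hasDerivWithinAt_iff_tendsto_slope.1 hdf
    rw [Icc_diff_right hab] at ht
    haveI : (𝓝[Ico a b] b).NeBot := by
      rw [nhdsWithin_Ico_eq_nhdsLT hab]; infer_instance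
    refine le_of_tendsto ht ?_
    have heva : ∀ᶠ s in 𝓝[Ico a b] b, a < s :=
      mem_nhdsWithin_of_mem_nhds (Ioi_mem_nhds hab)
    filter_upwards [eventually_mem_nhdsWithin, heva] with s hsm hsa
    rw [slope_def_field]
    have e : (Ee a b f s - Ee a b f b) / (s - b)
        = (Ee a b f b - Ee a b f s) / (b - s) := div_flip (by ring) (by ring)
    rw [e]
    have hcf : ContinuousOn (Ee a b f) (Icc s b) :=
      (Ee_contOn hab hf).mono (Icc_subset_Icc hsm.1 le_rfl)
    have hdiff : ∀ y ∈ Ioo s b, HasDerivAt (Ee a b f) (Tcv a b f y) y := by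
      intro y hy
      have hyI : y ∈ Icc a b := ⟨(lt_trans hsa hy.1).le, hy.2.le⟩
      exact ((master hab hf hyI).1).hasDerivAt
        (Icc_mem_nhds (lt_trans hsa hy.1) hy.2)
    obtain ⟨ξ, hξ, hslope⟩ :=
      exists_hasDerivAt_eq_slope (Ee a b f) _ hsm.2 hcf hdiff
    have e2 : (Ee a b f b - Ee a b f s) / (b - s) = Tcv a b f ξ := by
      rw [← hslope]
    rw [e2]
    have hξI : ξ ∈ Icc a b := ⟨(lt_trans hsa hξ.1).le, hξ.2.le⟩
    have hξIoo : ξ ∈ Ioo a b := ⟨lt_trans hsa hξ.1, hξ.2⟩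
    obtain ⟨hdgξ, hsgξ, _⟩ := master hab hg hξI
    have c3 : Tcv a b f ξ ≤ Tcv a b g ξ := hint ξ hξIoo
    have c4 : Tcv a b g ξ * (b - ξ) ≤ Ee a b g b - Ee a b g ξ := by
      have := hsgξ b hbI; linarith
    have c5 : Ee a b g b - Ee a b g ξ ≤ Tcv a b g b * (b - ξ) := by
      have := hsg ξ hξI; linarith
    have hξb : (0:ℝ) < b - ξ := by linarith [hξ.2]
    have hchain : Tcv a b f ξ * (b - ξ) ≤ Tcv a b g b * (b - ξ) := by
      have h6 := mul_le_mul_of_nonneg_right c3 hξb.le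
      linarith
    exact (mul_le_mul_iff_of_pos_right hξb).1 hchain
  · exact hint x ⟨hxa, hxb⟩
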